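/- For any complex numbers $z_n$ indexed by integers and any positive integer $Q$, and real numbers $a < b$, one has $\left|\sum_{a<n<b} z_n\right|^2 \le \left(1+\frac{b-a}{Q}\right)\sum_{|q|<Q}\left(1-\frac{|q|}{Q}\right)\sum_{\substack{a<n<b\\ a<n+q<b}} z_{n+q}\overline{z_n}$ (where in particular the right-hand side is a nonnegative real). -/

import Mathlib

open Finset Complex

lemma weyl_fiber_card (Q : ℕ) (q : ℤ) (hq : q.natAbs ≤ Q) :
    ((Finset.range Q ×ˢ Finset.range Q).filter (fun p => (p.1 : ℤ) - (p.2 : ℤ) = q)).card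
      = Q - q.natAbs := by
  have himg : ((Finset.range Q ×ˢ Finset.range Q).filter (fun p => (p.1 : ℤ) - (p.2 : ℤ) = q))
      = (Finset.range (Q - q.natAbs)).image (fun i => (i + q.toNat, i + (-q).toNat)) := by
    ext ⟨h1, h2⟩
    simp only [Finset.mem_filter, Finset.mem_product, Finset.mem_range, Finset.mem_image,
      Prod.mk.injEq]
    constructor
    · rintro ⟨⟨u, v⟩, hd⟩
      exact ⟨min h1 h2, by omega, by omega, by omega⟩
    · rintro ⟨i, hi, rfl, rfl⟩
      refine ⟨⟨by omega, by omega⟩, by omega⟩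
  have hinj : Function.Injective (fun i : ℕ => (i + q.toNat, i + (-q).toNat)) := by
    intro x y h
    simp only [Prod.mk.injEq] at h
    omega
  rw [himg, Finset.card_image_of_injective _ hinj, Finset.card_range]

lemma weyl_sum_pairs (Q : ℕ) (F : ℤ → ℂ) :
    ∑ p ∈ Finset.range Q ×ˢ Finset.range Q, F ((p.1 : ℤ) - (p.2 : ℤ))
      = ∑ q ∈ Finset.Icc (-(Q : ℤ) + 1) ((Q : ℤ) - 1), ((Q - q.natAbs : ℕ) : ℂ) * F q := by
  have hmaps : ∀ p ∈ Finset.range Q ×ˢ Finset.range Q,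
      (fun p : ℕ × ℕ => (p.1 : ℤ) - (p.2 : ℤ)) p ∈ Finset.Icc (-(Q : ℤ) + 1) ((Q : ℤ) - 1) := by
    intro p hp
    simp only [Finset.mem_product, Finset.mem_range] at hp
    simp only [Finset.mem_Icc]; omega
  rw [← Finset.sum_fiberwise_of_maps_to' hmaps F]
  refine Finset.sum_congr rfl fun q hq => ?_
  rw [Finset.sum_const, weyl_fiber_card Q q ?_, nsmul_eq_mul]
  simp only [Finset.mem_Icc] at hq; omega

/-- Weyl differencing inequality. -/
theorem weyl_differencing (z : ℤ → ℂ) (Q : ℕ) (hQ : 0 < Q) (a b : ℝ) (hab : a < b) :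
    let R : ℂ := ∑ q ∈ Finset.Icc (-(Q : ℤ) + 1) ((Q : ℤ) - 1),
      (1 - (|q| : ℝ) / Q) * ∑ n ∈ (Finset.Icc ⌊a⌋ ⌈b⌉).filter
          (fun n : ℤ => (a < (n : ℝ) ∧ (n : ℝ) < b) ∧ (a < ((n : ℝ) + (q : ℝ)) ∧ ((n : ℝ) + (q : ℝ)) < b)),
        z (n + q) * (starRingEnd ℂ) (z n)
    R.im = 0 ∧ 0 ≤ R.re ∧
      ‖∑ n ∈ (Finset.Icc ⌊a⌋ ⌈b⌉).filter (fun n : ℤ => a < (n : ℝ) ∧ (n : ℝ) < b), z n‖ ^ 2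
        ≤ (1 + (b - a) / Q) * R.re := by
  intro R
  set I : Finset ℤ := (Finset.Icc ⌊a⌋ ⌈b⌉).filter (fun n : ℤ => a < (n : ℝ) ∧ (n : ℝ) < b)
    with hI
  set T : ℤ → ℂ := fun q => ∑ n ∈ (Finset.Icc ⌊a⌋ ⌈b⌉).filter
      (fun n : ℤ => (a < (n : ℝ) ∧ (n : ℝ) < b) ∧
        (a < ((n : ℝ) + (q : ℝ)) ∧ ((n : ℝ) + (q : ℝ)) < b)),
    z (n + q) * (starRingEnd ℂ) (z n) with hT
  have hR : R = ∑ q ∈ Finset.Icc (-(Q : ℤ) + 1) ((Q : ℤ) - 1),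
      (1 - (|q| : ℝ) / Q : ℂ) * T q := rfl
  set M : Finset ℤ := I.biUnion (fun n => Finset.Icc (n - Q + 1) n) with hM
  set c : ℤ → ℂ := fun n => if a < (n : ℝ) ∧ (n : ℝ) < b then z n else 0 with hc
  set w : ℤ → ℂ := fun m => ∑ h ∈ Finset.range Q, c (m + h) with hw
  -- membership in I
  have hmemI : ∀ n : ℤ, n ∈ I ↔ (a < (n : ℝ) ∧ (n : ℝ) < b) := by
    intro n
    rw [hI, Finset.mem_filter, Finset.mem_Icc]
    constructor
    · exact fun h => h.2
    · intro h
      refine ⟨⟨?_, ?_⟩, h⟩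
      · have h1 : (⌊a⌋ : ℝ) ≤ a := Int.floor_le a
        have : (⌊a⌋ : ℝ) < (n : ℝ) := lt_of_le_of_lt h1 h.1
        exact_mod_cast this.le
      · have h1 : b ≤ (⌈b⌉ : ℝ) := Int.le_ceil b
        have : (n : ℝ) < (⌈b⌉ : ℝ) := lt_of_lt_of_le h.2 h1
        exact_mod_cast this.le
  have hIc : ∀ n : ℤ, c n ≠ 0 → n ∈ I := by
    intro n hn
    rw [hc] at hn
    by_cases h : a < (n : ℝ) ∧ (n : ℝ) < b
    · exact (hmemI n).2 h
    · simp [h] at hn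
  have hcI : ∀ n ∈ I, c n = z n := by
    intro n hn
    rw [hc]
    simp [(hmemI n).1 hn]
  have hMcover : ∀ n ∈ I, ∀ h ∈ Finset.range Q, n - (h : ℤ) ∈ M := by
    intro n hn h hh
    rw [Finset.mem_range] at hh
    rw [hM, Finset.mem_biUnion]
    exact ⟨n, hn, by rw [Finset.mem_Icc]; omega⟩
  -- step 1 inner sum
  have inner1 : ∀ h ∈ Finset.range Q, ∑ m ∈ M, c (m + (h : ℤ)) = ∑ n ∈ I, z n := by
    intro h hh
    have hsub : I.image (fun n => n - (h : ℤ)) ⊆ M := by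
      intro m hm
      rw [Finset.mem_image] at hm
      obtain ⟨n, hn, rfl⟩ := hm
      exact hMcover n hn h hh
    rw [← Finset.sum_subset hsub (by
      intro m hm hnm
      by_contra hne
      exact hnm (Finset.mem_image.2 ⟨m + h, hIc _ hne, by ring⟩))]
    rw [Finset.sum_image (by intro x _ y _ hxy; simp only at hxy; omega)]
    refine Finset.sum_congr rfl fun n hn => ?_
    rw [show n - (h : ℤ) + h = n by ring, hcI n hn]
  have key1 : ∑ m ∈ M, w m = (Q : ℂ) * ∑ n ∈ I, z n := by
    simp only [hw]
    rw [Finset.sum_comm, Finset.sum_congr rfl inner1, Finset.sum_const, Finset.card_range,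
      nsmul_eq_mul]
  -- step 2 inner sum
  have hmemIq : ∀ q n : ℤ, n ∈ (Finset.Icc ⌊a⌋ ⌈b⌉).filter
      (fun n : ℤ => (a < (n : ℝ) ∧ (n : ℝ) < b) ∧
        (a < ((n : ℝ) + (q : ℝ)) ∧ ((n : ℝ) + (q : ℝ)) < b)) ↔
      ((a < (n : ℝ) ∧ (n : ℝ) < b) ∧ (a < ((n : ℝ) + (q : ℝ)) ∧ ((n : ℝ) + (q : ℝ)) < b)) := by
    intro q n
    rw [Finset.mem_filter]
    constructor
    · exact fun h => h.2
    · intro h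
      refine ⟨?_, h⟩
      rw [← hI] at *
      exact Finset.mem_of_mem_filter n ((hmemI n).2 h.1)
  have inner2 : ∀ (q : ℤ), ∀ h2 ∈ Finset.range Q,
      ∑ m ∈ M, c (m + (h2 : ℤ) + q) * (starRingEnd ℂ) (c (m + (h2 : ℤ))) = T q := by
    intro q h2 hh2
    set Iq := (Finset.Icc ⌊a⌋ ⌈b⌉).filter
      (fun n : ℤ => (a < (n : ℝ) ∧ (n : ℝ) < b) ∧
        (a < ((n : ℝ) + (q : ℝ)) ∧ ((n : ℝ) + (q : ℝ)) < b)) with hIq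
    have hsub : Iq.image (fun n => n - (h2 : ℤ)) ⊆ M := by
      intro m hm
      rw [Finset.mem_image] at hm
      obtain ⟨n, hn, rfl⟩ := hm
      have hnI : n ∈ I := (hmemI n).2 ((hmemIq q n).1 hn).1
      exact hMcover n hnI h2 hh2
    rw [hT]
    rw [← Finset.sum_subset hsub (by
      intro m hm hnm
      by_contra hne
      have h1 : c (m + (h2 : ℤ) + q) ≠ 0 := fun h => hne (by rw [h, zero_mul])
      have h2' : c (m + (h2 : ℤ)) ≠ 0 := fun h => hne (by rw [h, map_zero, mul_zero])
      have hma : m + (h2 : ℤ) ∈ I := hIc _ h2'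
      have hmb : m + (h2 : ℤ) + q ∈ I := hIc _ h1
      have hcond1 := (hmemI _).1 hma
      have hcond2 := (hmemI _).1 hmb
      apply hnm
      refine Finset.mem_image.2 ⟨m + h2, ?_, by ring⟩
      refine (hmemIq q (m + h2)).2 ⟨hcond1, ?_, ?_⟩
      · have := hcond2.1; push_cast at this ⊢; linarith
      · have := hcond2.2; push_cast at this ⊢; linarith)]
    rw [Finset.sum_image (by intro x _ y _ hxy; simp only at hxy; omega)]
    refine Finset.sum_congr rfl fun n hn => ?_
    have hcond := (hmemIq q n).1 hn
    have h1 : n - (h2 : ℤ) + h2 = n := by ring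
    rw [h1, hcI n ((hmemI n).2 hcond.1)]
    congr 1
    have hco : a < ((n + q : ℤ) : ℝ) ∧ ((n + q : ℤ) : ℝ) < b := by
      push_cast
      exact hcond.2
    rw [hc]
    exact if_pos hco
  -- step 2
  have key2 : ∑ m ∈ M, w m * (starRingEnd ℂ) (w m) = (Q : ℂ) * R := by
    have expand : ∀ m : ℤ, w m * (starRingEnd ℂ) (w m)
        = ∑ p ∈ Finset.range Q ×ˢ Finset.range Q,
            c (m + (p.1 : ℤ)) * (starRingEnd ℂ) (c (m + (p.2 : ℤ))) := by
      intro m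
      rw [hw, map_sum, Finset.sum_mul_sum, ← Finset.sum_product']
    rw [Finset.sum_congr rfl (fun m _ => expand m), Finset.sum_comm]
    have inner : ∀ p ∈ Finset.range Q ×ˢ Finset.range Q,
        ∑ m ∈ M, c (m + (p.1 : ℤ)) * (starRingEnd ℂ) (c (m + (p.2 : ℤ)))
          = T ((p.1 : ℤ) - (p.2 : ℤ)) := by
      rintro ⟨h1, h2⟩ hp
      rw [Finset.mem_product] at hp
      have : ∀ m : ℤ, m + (h1 : ℤ) = m + (h2 : ℤ) + ((h1 : ℤ) - (h2 : ℤ)) := fun m => by ring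
      rw [Finset.sum_congr rfl (fun m _ => by rw [this m])]
      exact inner2 ((h1 : ℤ) - (h2 : ℤ)) h2 hp.2
    rw [Finset.sum_congr rfl inner, weyl_sum_pairs Q T, hR, Finset.mul_sum]
    refine Finset.sum_congr rfl fun q hq => ?_
    rw [Finset.mem_Icc] at hq
    have hqQ : q.natAbs ≤ Q := by omega
    have hQne : (Q : ℂ) ≠ 0 := Nat.cast_ne_zero.2 hQ.ne'
    have habs : ((q.natAbs : ℝ)) = |(q : ℝ)| := by rw [Nat.cast_natAbs, Int.cast_abs]
    have hcoef : ((Q - q.natAbs : ℕ) : ℂ) = (Q : ℂ) * (1 - (|q| : ℝ) / Q : ℂ) := by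
      rw [Nat.cast_sub hqQ, mul_sub, mul_one, mul_div_cancel₀ _ hQne]
      congr 1
      rw [← habs]
      push_cast
      rfl
    rw [hcoef, mul_assoc]
  -- R is a nonnegative real
  have hQne : (Q : ℂ) ≠ 0 := Nat.cast_ne_zero.2 hQ.ne'
  have key2' : (Q : ℂ) * R = ((∑ m ∈ M, Complex.normSq (w m) : ℝ) : ℂ) := by
    rw [← key2]
    push_cast
    exact Finset.sum_congr rfl fun m _ => Complex.mul_conj (w m)
  have hRval : R = ((((∑ m ∈ M, Complex.normSq (w m)) / Q : ℝ)) : ℂ) := by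
    rw [Complex.ofReal_div, Complex.ofReal_natCast, eq_div_iff hQne, mul_comm]
    exact key2'
  have hRre : R.re = (∑ m ∈ M, Complex.normSq (w m)) / Q := by
    rw [hRval, Complex.ofReal_re]
  have hRim : R.im = 0 := by rw [hRval, Complex.ofReal_im]
  have hsumnn : 0 ≤ ∑ m ∈ M, Complex.normSq (w m) :=
    Finset.sum_nonneg fun m _ => Complex.normSq_nonneg _
  have hQR : (0 : ℝ) < Q := by exact_mod_cast hQ
  have hRrenn : 0 ≤ R.re := by
    rw [hRre]; positivity
  refine ⟨hRim, hRrenn, ?_⟩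
  -- cardinality bound
  have hcard : (M.card : ℝ) ≤ (b - a) + Q := by
    rcases I.eq_empty_or_nonempty with hIe | hne
    · rw [hM, hIe]
      simp
      linarith
    · set n0 := I.min' hne with hn0
      set n1 := I.max' hne with hn1
      have hsub : M ⊆ Finset.Icc (n0 - Q + 1) n1 := by
        intro m hm
        rw [hM, Finset.mem_biUnion] at hm
        obtain ⟨n, hn, hmn⟩ := hm
        rw [Finset.mem_Icc] at hmn ⊢
        have h1 : n0 ≤ n := I.min'_le n hn
        have h2 : n ≤ n1 := I.le_max' n hn
        omega
      have hle : n0 ≤ n1 := I.min'_le n1 (I.max'_mem hne)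
      have hcard1 : (M.card : ℤ) ≤ n1 - n0 + Q := by
        have := Finset.card_le_card hsub
        rw [Int.card_Icc] at this
        omega
      have ha : a < (n0 : ℝ) := ((hmemI n0).1 (I.min'_mem hne)).1
      have hb : (n1 : ℝ) < b := ((hmemI n1).1 (I.max'_mem hne)).2
      have : (M.card : ℝ) ≤ (n1 : ℝ) - n0 + Q := by exact_mod_cast hcard1
      linarith
  -- Cauchy-Schwarz
  have hS : ∑ n ∈ I, z n = (∑ m ∈ M, w m) / Q := by
    rw [key1]; field_simp
  have hnorm : ‖∑ n ∈ I, z n‖ = ‖∑ m ∈ M, w m‖ / Q := by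
    rw [hS, norm_div]
    norm_num
  have hCS1 : ‖∑ m ∈ M, w m‖ ≤ ∑ m ∈ M, ‖w m‖ := norm_sum_le M w
  have hCS2 : (∑ m ∈ M, ‖w m‖) ^ 2 ≤ (M.card : ℝ) * ∑ m ∈ M, ‖w m‖ ^ 2 :=
    sq_sum_le_card_mul_sum_sq
  have hns : ∑ m ∈ M, ‖w m‖ ^ 2 = ∑ m ∈ M, Complex.normSq (w m) :=
    Finset.sum_congr rfl fun m _ => by
      rw [Complex.sq_norm]
  have hsum_eq : ∑ m ∈ M, Complex.normSq (w m) = Q * R.re := by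
    rw [hRre]; field_simp
  have hCS : ‖∑ m ∈ M, w m‖ ^ 2 ≤ (M.card : ℝ) * (Q * R.re) := by
    calc ‖∑ m ∈ M, w m‖ ^ 2 ≤ (∑ m ∈ M, ‖w m‖) ^ 2 := by
          apply pow_le_pow_left₀ (norm_nonneg _) hCS1
      _ ≤ (M.card : ℝ) * ∑ m ∈ M, ‖w m‖ ^ 2 := hCS2
      _ = (M.card : ℝ) * (Q * R.re) := by rw [hns, hsum_eq]
  rw [hnorm, div_pow]
  rw [div_le_iff₀ (by positivity)]
  have hfinal : (M.card : ℝ) * (Q * R.re) ≤ ((b - a) + Q) * (Q * R.re) := by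
    apply mul_le_mul_of_nonneg_right hcard
    positivity
  calc ‖∑ m ∈ M, w m‖ ^ 2 ≤ (M.card : ℝ) * (Q * R.re) := hCS
    _ ≤ ((b - a) + Q) * (Q * R.re) := hfinal
    _ = (1 + (b - a) / Q) * R.re * (Q : ℝ) ^ 2 := by field_simp; ring
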